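/- If each u_i is concave, strictly positive and differentiable on convex P, and θ* maximizes Σ_{i∈[n]} w_i·log(u_i(θ)) over P with weights w_i > 0, then for every θ' ∈ P, Σ_{i∈[n]} w_i·u_i(θ')/u_i(θ*) ≤ Σ_{i∈[n]} w_i; consequently θ* is weighted core-stable. -/

import Mathlib

open Filter

/-- Key inequality: first-order optimality of the weighted log objective. -/
lemma key_ineq
    {d : ℕ} (P : Set (EuclideanSpace ℝ (Fin d))) (hP : Convex ℝ P)
    (n : ℕ) (u : Fin n → EuclideanSpace ℝ (Fin d) → ℝ) (w : Fin n → ℝ)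
    (hconc : ∀ i, ConcaveOn ℝ P (u i))
    (hpos : ∀ i, ∀ θ ∈ P, 0 < u i θ)
    (hw : ∀ i, 0 < w i)
    (θstar : EuclideanSpace ℝ (Fin d)) (hθstar : θstar ∈ P)
    (hmax : ∀ θ ∈ P, ∑ i : Fin n, w i * Real.log (u i θ) ≤
      ∑ i : Fin n, w i * Real.log (u i θstar)) :
    ∀ θ' ∈ P, ∑ i : Fin n, w i * u i θ' / u i θstar ≤ ∑ i : Fin n, w i := by
  intro θ' hθ'
  set a : Fin n → ℝ := fun i => u i θstar with ha
  set b : Fin n → ℝ := fun i => u i θ' with hb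
  have hapos : ∀ i, 0 < a i := fun i => hpos i θstar hθstar
  have hbpos : ∀ i, 0 < b i := fun i => hpos i θ' hθ'
  set g : ℝ → ℝ := fun t => ∑ i : Fin n, w i * Real.log (a i + t * (b i - a i)) with hg
  set L : ℝ := ∑ i : Fin n, w i * ((b i - a i) / a i) with hL
  -- derivative of g at 0
  have hderiv : HasDerivAt g L 0 := by
    apply HasDerivAt.fun_sum
    intro i _
    have h1 : HasDerivAt (fun t : ℝ => a i + t * (b i - a i)) (b i - a i) 0 := by
      simpa using ((hasDerivAt_id (0:ℝ)).mul_const (b i - a i)).const_add (a i)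
    have h2 : HasDerivAt (fun t : ℝ => Real.log (a i + t * (b i - a i)))
        ((b i - a i) / (a i + 0 * (b i - a i))) 0 := by
      apply (Real.hasDerivAt_log (by simp [(hapos i).ne'])).comp 0 h1 |>.congr_deriv
      simp [div_eq_inv_mul]
    have h2' : HasDerivAt (fun t : ℝ => Real.log (a i + t * (b i - a i)))
        ((b i - a i) / a i) 0 := by simpa using h2
    simpa [mul_comm] using h2'.const_mul (w i)
  -- g t ≤ g 0 for t ∈ Ioc 0 1
  have hle : ∀ t ∈ Set.Ioc (0:ℝ) 1, g t ≤ g 0 := by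
    intro t ht
    have ht0 : 0 < t := ht.1
    have ht1 : t ≤ 1 := ht.2
    have hmem : (1 - t) • θstar + t • θ' ∈ P :=
      hP hθstar hθ' (by linarith) (le_of_lt ht0) (by ring)
    have hstep : g t ≤ ∑ i : Fin n, w i * Real.log (u i ((1 - t) • θstar + t • θ')) := by
      apply Finset.sum_le_sum
      intro i _
      have hcc := (hconc i).2 hθstar hθ' (by linarith : (0:ℝ) ≤ 1 - t) (le_of_lt ht0) (by ring)
      have harg : 0 < a i + t * (b i - a i) := by
        have : a i + t * (b i - a i) = (1 - t) * a i + t * b i := by ring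
        rw [this]
        have h1 : 0 ≤ (1 - t) * a i := mul_nonneg (by linarith) (hapos i).le
        have h2 : 0 < t * b i := mul_pos ht0 (hbpos i)
        linarith
      have hlog : Real.log (a i + t * (b i - a i)) ≤
          Real.log (u i ((1 - t) • θstar + t • θ')) := by
        apply Real.log_le_log harg
        have : a i + t * (b i - a i) = (1 - t) * a i + t * b i := by ring
        rw [this]
        simpa [smul_eq_mul] using hcc
      exact mul_le_mul_of_nonneg_left hlog (hw i).le
    have : ∑ i : Fin n, w i * Real.log (u i ((1 - t) • θstar + t • θ')) ≤ g 0 := by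
      have := hmax _ hmem
      simpa [hg] using this
    linarith
  -- L ≤ 0 via slopes
  have hLle : L ≤ 0 := by
    have hslope := hasDerivAt_iff_tendsto_slope.mp hderiv
    have htend : Tendsto (slope g 0) (nhdsWithin 0 (Set.Ioi (0:ℝ))) (nhds L) :=
      hslope.mono_left (nhdsWithin_mono 0 (by intro x hx; exact ne_of_gt hx))
    refine le_of_tendsto htend ?_
    filter_upwards [Ioc_mem_nhdsGT one_pos] with t ht
    have := hle t ht
    have hgt : g t - g 0 ≤ 0 := by linarith
    have : slope g 0 t = (g t - g 0) / t := by
      simp [slope_def_field, div_eq_inv_mul]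
    rw [this]
    exact div_nonpos_of_nonpos_of_nonneg hgt ht.1.le
  -- conclude
  have heq : ∀ i : Fin n, w i * ((b i - a i) / a i) = w i * b i / a i - w i := by
    intro i
    rw [mul_div_assoc, sub_div, div_self (hapos i).ne', mul_sub, mul_one]
  have : ∑ i : Fin n, (w i * b i / a i - w i) ≤ 0 := by
    rw [← Finset.sum_congr rfl (fun i _ => heq i)]
    exact hLle
  rw [Finset.sum_sub_distrib] at this
  linarith

/-- A maximizer `θ*` of the weighted log objective
`∑ i, w i · log (u i θ)` over convex `P` satisfies
`∑ i, w i · u i θ' / u i θ* ≤ ∑ i, w i` for all `θ' ∈ P`, and is weighted core-stable. -/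
theorem weighted_log_nash_maximizer_weighted_core_stable
    {d : ℕ} (P : Set (EuclideanSpace ℝ (Fin d))) (hP : Convex ℝ P)
    (n : ℕ) (u : Fin n → EuclideanSpace ℝ (Fin d) → ℝ) (w : Fin n → ℝ)
    (hconc : ∀ i, ConcaveOn ℝ P (u i))
    (hpos : ∀ i, ∀ θ ∈ P, 0 < u i θ)
    (hdiff : ∀ i, Differentiable ℝ (u i))
    (hw : ∀ i, 0 < w i)
    (θstar : EuclideanSpace ℝ (Fin d)) (hθstar : θstar ∈ P)
    (hmax : ∀ θ ∈ P, ∑ i : Fin n, w i * Real.log (u i θ) ≤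
      ∑ i : Fin n, w i * Real.log (u i θstar)) :
    (∀ θ' ∈ P, ∑ i : Fin n, w i * u i θ' / u i θstar ≤ ∑ i : Fin n, w i) ∧
    ¬ ∃ θ' ∈ P, ∃ S : Finset (Fin n), S.Nonempty ∧
        (∀ i ∈ S, (∑ j ∈ S, w j) / (∑ j : Fin n, w j) * u i θ' ≥ u i θstar) ∧
        (∃ i ∈ S, (∑ j ∈ S, w j) / (∑ j : Fin n, w j) * u i θ' > u i θstar) := by
  have hkey := key_ineq P hP n u w hconc hpos hw θstar hθstar hmax
  refine ⟨hkey, ?_⟩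
  rintro ⟨θ', hθ', S, hSne, hall, i₀, hi₀, hstrict⟩
  set W : ℝ := ∑ j : Fin n, w j with hW
  set Ws : ℝ := ∑ j ∈ S, w j with hWs
  haveI : Nonempty (Fin n) := ⟨i₀⟩
  have hWpos : 0 < W := Finset.sum_pos (fun i _ => hw i) Finset.univ_nonempty
  have hWspos : 0 < Ws := Finset.sum_pos (fun i hi => hw i) hSne
  have hterm : ∀ i ∈ S, w i * (W / Ws) ≤ w i * u i θ' / u i θstar := by
    intro i hi
    have ha := hpos i θstar hθstar
    have h := hall i hi
    -- (Ws/W) * b ≥ a  →  b/a ≥ W/Ws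
    rw [ge_iff_le, div_mul_eq_mul_div, le_div_iff₀ hWpos] at h
    rw [mul_div_assoc, mul_le_mul_iff_right₀ (hw i), div_le_div_iff₀ hWspos ha]
    nlinarith
  have htermstrict : w i₀ * (W / Ws) < w i₀ * u i₀ θ' / u i₀ θstar := by
    have ha := hpos i₀ θstar hθstar
    rw [gt_iff_lt, div_mul_eq_mul_div, lt_div_iff₀ hWpos] at hstrict
    rw [mul_div_assoc, mul_lt_mul_iff_right₀ (hw i₀), div_lt_div_iff₀ hWspos ha]
    nlinarith
  have hsumS : ∑ i ∈ S, w i * (W / Ws) < ∑ i ∈ S, w i * u i θ' / u i θstar :=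
    Finset.sum_lt_sum hterm ⟨i₀, hi₀, htermstrict⟩
  have hsumS' : (∑ i ∈ S, w i * (W / Ws)) = W := by
    rw [← Finset.sum_mul, ← hWs]
    field_simp
  have hmono : ∑ i ∈ S, w i * u i θ' / u i θstar ≤ ∑ i : Fin n, w i * u i θ' / u i θstar := by
    apply Finset.sum_le_sum_of_subset_of_nonneg (Finset.subset_univ S)
    intro i _ _
    exact div_nonneg (mul_nonneg (hw i).le (hpos i θ' hθ').le) (hpos i θstar hθstar).le
  have := hkey θ' hθ'
  rw [hsumS'] at hsumS
  linarith
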